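/- Let d ≥ 2, k ≥ 1 an integer, and σ_k(t) = max(0,t)^k. For all φ, φ̂ ∈ [0,π]^{d−2} × [0,2π) and all b, b̂ ∈ [−√d, √d], one has ∫_{(0,1)^d} |σ_k(S(φ)·x + b) − σ_k(S(φ̂)·x + b̂)|² dx ≤ k²·(4d)^{k−1}·(d/3 + 1)·(|φ − φ̂|² + (b − b̂)²), where S is the hyperspherical coordinate map and |·| denotes Euclidean norms. Consequently, the parametrization map P(φ,b)(x) = σ_k(S(φ)·x + b), viewed as a map into L²((0,1)^d), is Lipschitz with modulus at most k·(2√d)^{k−1}·√(d/3 + 1). -/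

import Mathlib

open Real

/-- Extension of `φ : ℝ^{d-1}` (0-indexed angles) to a function on `ℕ`, by zero. -/
noncomputable def angleExt (d : ℕ) (φ : EuclideanSpace ℝ (Fin (d - 1))) (j : ℕ) : ℝ :=
  if h : j < d - 1 then φ ⟨j, h⟩ else 0

/-- The hyperspherical coordinate map `S : ℝ^{d-1} → ℝ^d`, defined (0-indexed) by
`S(φ)ᵢ = (∏_{j<i} sin φⱼ) cos φᵢ` for `i < d-1` and `S(φ)_{d-1} = ∏_{j<d-1} sin φⱼ`. -/
noncomputable def hyperS (d : ℕ) (φ : EuclideanSpace ℝ (Fin (d - 1))) :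
    EuclideanSpace ℝ (Fin d) :=
  (WithLp.equiv 2 (Fin d → ℝ)).symm fun i =>
    if (i : ℕ) < d - 1 then
      (∏ j ∈ Finset.range i, Real.sin (angleExt d φ j)) * Real.cos (angleExt d φ i)
    else
      ∏ j ∈ Finset.range (d - 1), Real.sin (angleExt d φ j)

/-- The domain `[0,π]^{d-2} × [0,2π)` of the hyperspherical coordinate map
(0-indexed: the first `d-2` angles lie in `[0,π]`, the last one in `[0,2π)`). -/
def inHyperDomain (d : ℕ) (φ : EuclideanSpace ℝ (Fin (d - 1))) : Prop :=
  ∀ i : Fin (d - 1),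
    if (i : ℕ) < d - 2 then φ i ∈ Set.Icc 0 Real.pi
    else φ i ∈ Set.Ico 0 (2 * Real.pi)

/-- `1 - cos t ≤ t²/2`. -/
lemma aux_one_sub_cos_le (t : ℝ) : 1 - Real.cos t ≤ t ^ 2 / 2 := by
  have h1 : Real.sin (t / 2) ^ 2 ≤ (t / 2) ^ 2 := Real.sin_sq_le_sq
  have h2 : Real.sin (t / 2) ^ 2 + Real.cos (t / 2) ^ 2 = 1 := Real.sin_sq_add_cos_sq _
  have h3 : Real.cos (t / 2) ^ 2 = 1 / 2 + Real.cos (2 * (t / 2)) / 2 := Real.cos_sq _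
  have h4 : 2 * (t / 2) = t := by ring
  rw [h4] at h3
  nlinarith

/-- Key scalar lemma for the Lipschitz property of the spherical map. -/
lemma aux_key (P Q x y : ℝ) (hP : |P| ≤ 1) (hQ : |Q| ≤ 1) :
    (P * Real.cos x - Q * Real.cos y) ^ 2 + (P * Real.sin x - Q * Real.sin y) ^ 2
      ≤ (P - Q) ^ 2 + (x - y) ^ 2 := by
  have hc : Real.cos x * Real.cos y + Real.sin x * Real.sin y = Real.cos (x - y) := by
    rw [Real.cos_sub]
  have h1 : 1 - Real.cos (x - y) ≤ (x - y) ^ 2 / 2 := aux_one_sub_cos_le _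
  have h2 : Real.cos (x - y) ≤ 1 := Real.cos_le_one _
  have hPQ : P * Q ≤ 1 := by
    calc P * Q ≤ |P * Q| := le_abs_self _
    _ = |P| * |Q| := abs_mul _ _
    _ ≤ 1 := by nlinarith [abs_nonneg P, abs_nonneg Q]
  have px := Real.sin_sq_add_cos_sq x
  have py := Real.sin_sq_add_cos_sq y
  have hL : (P * Real.cos x - Q * Real.cos y) ^ 2 + (P * Real.sin x - Q * Real.sin y) ^ 2
      = P ^ 2 + Q ^ 2 - 2 * (P * Q) * (Real.cos x * Real.cos y + Real.sin x * Real.sin y) := by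
    linear_combination P ^ 2 * px + Q ^ 2 * py
  rw [hc] at hL
  rw [hL]
  nlinarith [mul_nonneg (sub_nonneg.2 hPQ) (sub_nonneg.2 h2)]

/-- products of sines have absolute value at most 1 -/
lemma aux_abs_prod_sin (a : ℕ → ℝ) (n : ℕ) :
    |∏ j ∈ Finset.range n, Real.sin (a j)| ≤ 1 := by
  rw [Finset.abs_prod]
  refine Finset.prod_le_one (fun i _ => abs_nonneg _) (fun i _ => ?_)
  exact abs_le.2 ⟨Real.neg_one_le_sin _, Real.sin_le_one _⟩

/-- telescoping identity: the spherical map has unit norm -/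
lemma aux_norm_one (a : ℕ → ℝ) (n : ℕ) :
    (∑ i ∈ Finset.range n,
        ((∏ j ∈ Finset.range i, Real.sin (a j)) * Real.cos (a i)) ^ 2)
      + (∏ j ∈ Finset.range n, Real.sin (a j)) ^ 2 = 1 := by
  induction n with
  | zero => simp
  | succ n ih =>
    rw [Finset.sum_range_succ, Finset.prod_range_succ]
    have := Real.sin_sq_add_cos_sq (a n)
    nlinarith [ih]

/-- telescoping inequality: the spherical map is 1-Lipschitz -/
lemma aux_lip (a b : ℕ → ℝ) (n : ℕ) :
    (∑ i ∈ Finset.range n,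
        ((∏ j ∈ Finset.range i, Real.sin (a j)) * Real.cos (a i)
          - (∏ j ∈ Finset.range i, Real.sin (b j)) * Real.cos (b i)) ^ 2)
      + ((∏ j ∈ Finset.range n, Real.sin (a j))
          - (∏ j ∈ Finset.range n, Real.sin (b j))) ^ 2
    ≤ ∑ i ∈ Finset.range n, (a i - b i) ^ 2 := by
  induction n with
  | zero => simp
  | succ n ih =>
    rw [Finset.sum_range_succ, Finset.prod_range_succ, Finset.prod_range_succ,
      Finset.sum_range_succ (fun i => (a i - b i) ^ 2)]
    have key := aux_key (∏ j ∈ Finset.range n, Real.sin (a j))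
      (∏ j ∈ Finset.range n, Real.sin (b j)) (a n) (b n)
      (aux_abs_prod_sin a n) (aux_abs_prod_sin b n)
    linarith

/-- Lipschitz bound for `t ^ (k+1)` on `[0, M]`. -/
lemma aux_pow_lip (M : ℝ) (hM : 0 ≤ M) (k : ℕ) :
    ∀ U V : ℝ, 0 ≤ U → U ≤ M → 0 ≤ V → V ≤ M →
      |U ^ (k + 1) - V ^ (k + 1)| ≤ (k + 1) * M ^ k * |U - V| := by
  induction k with
  | zero => intro U V _ _ _ _; simp
  | succ k ih =>
    intro U V hU hUM hV hVM
    have h1 : U ^ (k + 2) - V ^ (k + 2)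
        = U * (U ^ (k + 1) - V ^ (k + 1)) + V ^ (k + 1) * (U - V) := by ring
    have h2 : |U ^ (k + 2) - V ^ (k + 2)|
        ≤ U * |U ^ (k + 1) - V ^ (k + 1)| + V ^ (k + 1) * |U - V| := by
      rw [h1]
      refine (abs_add_le _ _).trans ?_
      rw [abs_mul, abs_mul, abs_of_nonneg hU, abs_of_nonneg (pow_nonneg hV _)]
    have h3 := ih U V hU hUM hV hVM
    have h4 : V ^ (k + 1) ≤ M ^ (k + 1) := pow_le_pow_left₀ hV hVM _
    have h5 : U * |U ^ (k + 1) - V ^ (k + 1)| ≤ M * ((k + 1) * M ^ k * |U - V|) := by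
      exact mul_le_mul hUM h3 (abs_nonneg _) hM
    have h6 : V ^ (k + 1) * |U - V| ≤ M ^ (k + 1) * |U - V| :=
      mul_le_mul_of_nonneg_right h4 (abs_nonneg _)
    have hMk : M * M ^ k = M ^ (k + 1) := (pow_succ M k).symm ▸ by ring
    calc |U ^ (k + 2) - V ^ (k + 2)| ≤ _ := h2
      _ ≤ M * ((k + 1) * M ^ k * |U - V|) + M ^ (k + 1) * |U - V| := by linarith
      _ = (↑(k + 1) + 1) * M ^ (k + 1) * |U - V| := by push_cast; rw [← hMk]; ring

/-- Lipschitz bound for `σ_k` squared. -/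
lemma aux_relu_pow (k : ℕ) (hk : 1 ≤ k) (M u v : ℝ) (hM : 0 ≤ M)
    (hu : |u| ≤ M) (hv : |v| ≤ M) :
    (max 0 u ^ k - max 0 v ^ k) ^ 2 ≤ (k : ℝ) ^ 2 * (M ^ 2) ^ (k - 1) * (u - v) ^ 2 := by
  obtain ⟨m, rfl⟩ : ∃ m, k = m + 1 := ⟨k - 1, by omega⟩
  set U := max 0 u with hU
  set V := max 0 v with hV
  have hU0 : 0 ≤ U := le_max_left _ _
  have hV0 : 0 ≤ V := le_max_left _ _
  have hUM : U ≤ M := max_le hM ((le_abs_self u).trans hu)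
  have hVM : V ≤ M := max_le hM ((le_abs_self v).trans hv)
  have h1 : |U ^ (m + 1) - V ^ (m + 1)| ≤ (m + 1) * M ^ m * |U - V| :=
    aux_pow_lip M hM m U V hU0 hUM hV0 hVM
  have h2 : |U - V| ≤ |u - v| := by
    rw [hU, hV, max_comm 0 u, max_comm 0 v]
    exact abs_max_sub_max_le_abs u v 0
  have h3 : |U ^ (m + 1) - V ^ (m + 1)| ≤ (m + 1) * M ^ m * |u - v| := by
    refine h1.trans (mul_le_mul_of_nonneg_left h2 ?_)
    positivity
  calc (U ^ (m + 1) - V ^ (m + 1)) ^ 2 = |U ^ (m + 1) - V ^ (m + 1)| ^ 2 := (sq_abs _).symm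
    _ ≤ ((m + 1) * M ^ m * |u - v|) ^ 2 := by
        apply pow_le_pow_left₀ (abs_nonneg _) h3
    _ = ((m : ℝ) + 1) ^ 2 * (M ^ 2) ^ m * (u - v) ^ 2 := by
        rw [mul_pow, mul_pow, sq_abs]; ring
    _ = (↑(m + 1) : ℝ) ^ 2 * (M ^ 2) ^ (m + 1 - 1) * (u - v) ^ 2 := by push_cast; ring_nf

/-- Cauchy–Schwarz in one extra dimension. -/
lemma aux_cs (s β A X : ℝ) (hA : 0 ≤ A) (hX : 0 ≤ X) (hs : s ^ 2 ≤ A * X) :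
    (s + β) ^ 2 ≤ (A + β ^ 2) * (X + 1) := by
  have h4 : (2 * s * β) ^ 2 ≤ (A + X * β ^ 2) ^ 2 := by
    nlinarith [sq_nonneg (A - X * β ^ 2), mul_le_mul_of_nonneg_right hs (sq_nonneg β)]
  have h5 : |2 * s * β| ≤ |A + X * β ^ 2| := sq_le_sq.1 h4
  have h6 : 2 * s * β ≤ A + X * β ^ 2 := by
    calc 2 * s * β ≤ |2 * s * β| := le_abs_self _
      _ ≤ |A + X * β ^ 2| := h5
      _ = A + X * β ^ 2 := abs_of_nonneg (by positivity)
  nlinarith [hs, h6]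

lemma angleExt_coe (d : ℕ) (φ : EuclideanSpace ℝ (Fin (d - 1))) (i : Fin (d - 1)) :
    angleExt d φ (i : ℕ) = φ i := by
  simp [angleExt, i.isLt]

lemma hyperS_apply (d : ℕ) (φ : EuclideanSpace ℝ (Fin (d - 1))) (i : Fin d) :
    hyperS d φ i =
      if (i : ℕ) < d - 1 then
        (∏ j ∈ Finset.range i, Real.sin (angleExt d φ j)) * Real.cos (angleExt d φ i)
      else
        ∏ j ∈ Finset.range (d - 1), Real.sin (angleExt d φ j) := by
  rfl

lemma hyperS_norm_sq (d : ℕ) (hd : 1 ≤ d) (φ : EuclideanSpace ℝ (Fin (d - 1))) :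
    ∑ i : Fin d, (hyperS d φ i) ^ 2 = 1 := by
  classical
  set g : ℕ → ℝ := fun m =>
    (if m < d - 1 then
        (∏ j ∈ Finset.range m, Real.sin (angleExt d φ j)) * Real.cos (angleExt d φ m)
      else ∏ j ∈ Finset.range (d - 1), Real.sin (angleExt d φ j)) with hg
  have h1 : ∀ i : Fin d, hyperS d φ i = g (i : ℕ) := fun i => hyperS_apply d φ i
  have h2 : ∑ i : Fin d, (hyperS d φ i) ^ 2 = ∑ m ∈ Finset.range d, (g m) ^ 2 := by
    simp_rw [h1]
    exact Fin.sum_univ_eq_sum_range (fun m => (g m) ^ 2) d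
  have hd1 : d - 1 + 1 = d := by omega
  rw [h2, show Finset.range d = Finset.range (d - 1 + 1) by rw [hd1], Finset.sum_range_succ]
  have h3 : ∀ m ∈ Finset.range (d - 1), (g m) ^ 2 =
      ((∏ j ∈ Finset.range m, Real.sin (angleExt d φ j)) * Real.cos (angleExt d φ m)) ^ 2 := by
    intro m hm
    simp only [Finset.mem_range] at hm
    simp only [hg, if_pos hm]
  have h4 : g (d - 1) = ∏ j ∈ Finset.range (d - 1), Real.sin (angleExt d φ j) := by
    simp only [hg]; simp
  rw [Finset.sum_congr rfl h3, h4]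
  exact aux_norm_one (angleExt d φ) (d - 1)

lemma hyperS_diff_sq (d : ℕ) (hd : 1 ≤ d) (φ ψ : EuclideanSpace ℝ (Fin (d - 1))) :
    ∑ i : Fin d, (hyperS d φ i - hyperS d ψ i) ^ 2
      ≤ ∑ i : Fin (d - 1), (φ i - ψ i) ^ 2 := by
  classical
  set g : ℕ → ℝ := fun m =>
    ((if m < d - 1 then
        (∏ j ∈ Finset.range m, Real.sin (angleExt d φ j)) * Real.cos (angleExt d φ m)
      else ∏ j ∈ Finset.range (d - 1), Real.sin (angleExt d φ j)) -
     (if m < d - 1 then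
        (∏ j ∈ Finset.range m, Real.sin (angleExt d ψ j)) * Real.cos (angleExt d ψ m)
      else ∏ j ∈ Finset.range (d - 1), Real.sin (angleExt d ψ j))) ^ 2 with hg
  have h2 : ∑ i : Fin d, (hyperS d φ i - hyperS d ψ i) ^ 2 = ∑ m ∈ Finset.range d, g m := by
    simp_rw [hyperS_apply]
    exact Fin.sum_univ_eq_sum_range g d
  have hd1 : d - 1 + 1 = d := by omega
  rw [h2, show Finset.range d = Finset.range (d - 1 + 1) by rw [hd1], Finset.sum_range_succ]
  have h3 : ∀ m ∈ Finset.range (d - 1), g m =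
      ((∏ j ∈ Finset.range m, Real.sin (angleExt d φ j)) * Real.cos (angleExt d φ m)
        - (∏ j ∈ Finset.range m, Real.sin (angleExt d ψ j)) * Real.cos (angleExt d ψ m)) ^ 2 := by
    intro m hm
    simp only [Finset.mem_range] at hm
    simp only [hg, if_pos hm]
  have h4 : g (d - 1) = ((∏ j ∈ Finset.range (d - 1), Real.sin (angleExt d φ j))
      - ∏ j ∈ Finset.range (d - 1), Real.sin (angleExt d ψ j)) ^ 2 := by
    simp only [hg]; simp
  rw [Finset.sum_congr rfl h3, h4]
  have h5 : ∑ i : Fin (d - 1), (φ i - ψ i) ^ 2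
      = ∑ m ∈ Finset.range (d - 1), (angleExt d φ m - angleExt d ψ m) ^ 2 := by
    rw [← Fin.sum_univ_eq_sum_range (fun m => (angleExt d φ m - angleExt d ψ m) ^ 2) (d - 1)]
    exact Finset.sum_congr rfl fun i _ => by rw [angleExt_coe, angleExt_coe]
  rw [h5]
  exact aux_lip (angleExt d φ) (angleExt d ψ) (d - 1)


variable {d : ℕ}

open MeasureTheory

def auxBox (d : ℕ) : Set (Fin d → ℝ) := Set.univ.pi fun _ => Set.Ioo (0 : ℝ) 1

lemma auxBox_meas : MeasurableSet (auxBox d) :=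
  MeasurableSet.univ_pi fun _ => measurableSet_Ioo

lemma auxBox_volume : (volume (auxBox d)).toReal = 1 := by
  rw [auxBox, volume_pi_pi]
  simp [Real.volume_Ioo]

lemma aux_int_Ioo_sq : ∫ t in Set.Ioo (0 : ℝ) 1, t ^ 2 = 1 / 3 := by
  rw [← MeasureTheory.integral_Ioc_eq_integral_Ioo,
    ← intervalIntegral.integral_of_le (by norm_num : (0:ℝ) ≤ 1)]
  rw [integral_pow]; norm_num

lemma aux_int_Ioo_one : ∫ t in Set.Ioo (0 : ℝ) 1, (1 : ℝ) = 1 := by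
  simp [Real.volume_Ioo]

noncomputable def auxF (i j : Fin d) : ℝ → ℝ :=
  (Set.Ioo (0 : ℝ) 1).indicator fun t => if j = i then t ^ 2 else 1

lemma auxF_integrable (i j : Fin d) : Integrable (auxF i j) := by
  rw [auxF, integrable_indicator_iff measurableSet_Ioo]
  by_cases h : j = i
  · simp only [h, if_pos rfl]
    exact ((continuous_pow 2).integrableOn_Icc (a := (0:ℝ)) (b := 1)).mono_set
      Set.Ioo_subset_Icc_self
  · simp only [if_neg h]
    exact (continuous_const.integrableOn_Icc (a := (0:ℝ)) (b := 1)).mono_set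
      Set.Ioo_subset_Icc_self

lemma auxF_prod (i : Fin d) (y : Fin d → ℝ) :
    (auxBox d).indicator (fun y => (y i) ^ 2) y = ∏ j, auxF i j (y j) := by
  by_cases hy : y ∈ auxBox d
  · rw [Set.indicator_of_mem hy]
    have hmem : ∀ j, y j ∈ Set.Ioo (0 : ℝ) 1 := fun j => hy j (Set.mem_univ j)
    have h1 : ∀ j, auxF i j (y j) = if j = i then (y j) ^ 2 else 1 := fun j =>
      Set.indicator_of_mem (hmem j) _
    rw [Finset.prod_congr rfl fun j _ => h1 j]
    rw [Finset.prod_eq_single i (fun j _ hj => if_neg hj) (by simp)]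
    simp
  · rw [Set.indicator_of_notMem hy]
    simp only [auxBox, Set.mem_pi, Set.mem_univ, forall_true_left] at hy
    push_neg at hy
    obtain ⟨j, hj⟩ := hy
    refine (Finset.prod_eq_zero (Finset.mem_univ j) ?_).symm
    exact Set.indicator_of_notMem hj _

lemma aux_integrableOn_sq (i : Fin d) :
    IntegrableOn (fun y : Fin d → ℝ => (y i) ^ 2) (auxBox d) := by
  have h := (integrable_congr (Filter.Eventually.of_forall (auxF_prod i))).2
    (Integrable.fintype_prod (f := auxF i) (auxF_integrable i))
  rwa [integrable_indicator_iff auxBox_meas] at h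

lemma aux_integral_sq (i : Fin d) :
    ∫ y in auxBox d, (y i) ^ 2 = 1 / 3 := by
  rw [← integral_indicator auxBox_meas]
  rw [integral_congr_ae (Filter.Eventually.of_forall (auxF_prod i))]
  rw [volume_pi, MeasureTheory.integral_fintype_prod_eq_prod (fun j => auxF i j)]
  have h1 : ∀ j : Fin d, ∫ t, auxF i j t = if j = i then 1/3 else 1 := by
    intro j
    rw [auxF, integral_indicator measurableSet_Ioo]
    by_cases h : j = i
    · simp only [h, if_pos rfl]; exact aux_int_Ioo_sq
    · simp only [if_neg h]; exact aux_int_Ioo_one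
  rw [Finset.prod_congr rfl fun j _ => h1 j]
  rw [Finset.prod_eq_single i (fun j _ hj => if_neg hj) (by simp)]
  simp

open MeasureTheory

lemma auxBox_volume_ennreal {d : ℕ} : volume (auxBox d) = 1 := by
  rw [auxBox, volume_pi_pi]
  simp [Real.volume_Ioo]

lemma aux_norm_sq_eq (n : ℕ) (z : EuclideanSpace ℝ (Fin n)) : ‖z‖ ^ 2 = ∑ i, (z i) ^ 2 := by
  rw [EuclideanSpace.norm_eq, Real.sq_sqrt (by positivity)]
  exact Finset.sum_congr rfl fun i _ => by rw [Real.norm_eq_abs, sq_abs]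

open MeasureTheory in
/-- Lipschitz estimate for the dictionary parametrization
`P(φ,b)(x) = σ_k(S(φ)·x + b)` into `L²((0,1)^d)` (Remark 4.3):
the squared `L²` distance is bounded by `k²(4d)^{k-1}(d/3+1)(|φ-φ̂|² + (b-b̂)²)`,
and consequently `P` is Lipschitz with modulus at most `k(2√d)^{k-1}√(d/3+1)`. -/
theorem stmt6 (d k : ℕ) (hd : 2 ≤ d) (hk : 1 ≤ k)
    (φ ψ : EuclideanSpace ℝ (Fin (d - 1)))
    (hφ : inHyperDomain d φ) (hψ : inHyperDomain d ψ)
    (b c : ℝ) (hb : b ∈ Set.Icc (-Real.sqrt d) (Real.sqrt d))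
    (hc : c ∈ Set.Icc (-Real.sqrt d) (Real.sqrt d)) :
    (∫ x in {x : EuclideanSpace ℝ (Fin d) | ∀ i, x i ∈ Set.Ioo (0 : ℝ) 1},
        (max 0 ((∑ i, hyperS d φ i * x i) + b) ^ k
          - max 0 ((∑ i, hyperS d ψ i * x i) + c) ^ k) ^ 2)
      ≤ (k : ℝ) ^ 2 * (4 * d) ^ (k - 1) * ((d : ℝ) / 3 + 1) * (‖φ - ψ‖ ^ 2 + (b - c) ^ 2)
    ∧
    Real.sqrt (∫ x in {x : EuclideanSpace ℝ (Fin d) | ∀ i, x i ∈ Set.Ioo (0 : ℝ) 1},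
        (max 0 ((∑ i, hyperS d φ i * x i) + b) ^ k
          - max 0 ((∑ i, hyperS d ψ i * x i) + c) ^ k) ^ 2)
      ≤ (k : ℝ) * (2 * Real.sqrt d) ^ (k - 1) * Real.sqrt ((d : ℝ) / 3 + 1) *
          Real.sqrt (‖φ - ψ‖ ^ 2 + (b - c) ^ 2) := by

  have hd1 : 1 ≤ d := by omega
  have hdR : (0:ℝ) ≤ (d:ℝ) := Nat.cast_nonneg d
  set N : ℝ := ‖φ - ψ‖ ^ 2 + (b - c) ^ 2 with hN
  set K : ℝ := (k:ℝ) ^ 2 * (4 * d) ^ (k - 1) * N with hK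
  have hNnn : 0 ≤ N := by positivity
  have h4d : (0:ℝ) ≤ 4 * d := by positivity
  have hKnn : 0 ≤ K := by positivity
  have hM2 : (2 * Real.sqrt d) ^ 2 = 4 * (d:ℝ) := by
    rw [mul_pow, Real.sq_sqrt hdR]; ring
  -- pointwise bound
  have hpt : ∀ y : Fin d → ℝ, (∀ i, y i ∈ Set.Ioo (0:ℝ) 1) →
      (max 0 ((∑ i, hyperS d φ i * y i) + b) ^ k
        - max 0 ((∑ i, hyperS d ψ i * y i) + c) ^ k) ^ 2
        ≤ K * ((∑ i, (y i) ^ 2) + 1) := by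
    intro y hy
    have hφn : ∑ i : Fin d, (hyperS d φ i) ^ 2 = 1 := hyperS_norm_sq d hd1 φ
    have hψn : ∑ i : Fin d, (hyperS d ψ i) ^ 2 = 1 := hyperS_norm_sq d hd1 ψ
    have hysq : ∑ i, (y i) ^ 2 ≤ (d:ℝ) := by
      calc ∑ i, (y i) ^ 2 ≤ ∑ _i : Fin d, (1:ℝ) :=
            Finset.sum_le_sum fun i _ => by nlinarith [(hy i).1, (hy i).2]
        _ = d := by simp
    have hysq0 : 0 ≤ ∑ i, (y i) ^ 2 := by positivity
    have hCSφ : (∑ i, hyperS d φ i * y i) ^ 2 ≤ (d:ℝ) := by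
      calc (∑ i, hyperS d φ i * y i) ^ 2
          ≤ (∑ i, (hyperS d φ i) ^ 2) * (∑ i, (y i) ^ 2) :=
            Finset.sum_mul_sq_le_sq_mul_sq _ _ _
        _ = ∑ i, (y i) ^ 2 := by rw [hφn, one_mul]
        _ ≤ d := hysq
    have hCSψ : (∑ i, hyperS d ψ i * y i) ^ 2 ≤ (d:ℝ) := by
      calc (∑ i, hyperS d ψ i * y i) ^ 2
          ≤ (∑ i, (hyperS d ψ i) ^ 2) * (∑ i, (y i) ^ 2) :=
            Finset.sum_mul_sq_le_sq_mul_sq _ _ _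
        _ = ∑ i, (y i) ^ 2 := by rw [hψn, one_mul]
        _ ≤ d := hysq
    have hub : |(∑ i, hyperS d φ i * y i) + b| ≤ 2 * Real.sqrt d := by
      calc |(∑ i, hyperS d φ i * y i) + b| ≤ |∑ i, hyperS d φ i * y i| + |b| := abs_add_le _ _
        _ ≤ Real.sqrt d + Real.sqrt d :=
            add_le_add (Real.abs_le_sqrt hCSφ) (abs_le.2 ⟨hb.1, hb.2⟩)
        _ = 2 * Real.sqrt d := by ring
    have hvb : |(∑ i, hyperS d ψ i * y i) + c| ≤ 2 * Real.sqrt d := by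
      calc |(∑ i, hyperS d ψ i * y i) + c| ≤ |∑ i, hyperS d ψ i * y i| + |c| := abs_add_le _ _
        _ ≤ Real.sqrt d + Real.sqrt d :=
            add_le_add (Real.abs_le_sqrt hCSψ) (abs_le.2 ⟨hc.1, hc.2⟩)
        _ = 2 * Real.sqrt d := by ring
    have hstep1 := aux_relu_pow k hk (2 * Real.sqrt d)
      ((∑ i, hyperS d φ i * y i) + b) ((∑ i, hyperS d ψ i * y i) + c)
      (by positivity) hub hvb
    rw [hM2] at hstep1
    have huv : ((∑ i, hyperS d φ i * y i) + b) - ((∑ i, hyperS d ψ i * y i) + c)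
        = (∑ i, (hyperS d φ i - hyperS d ψ i) * y i) + (b - c) := by
      simp only [sub_mul]
      rw [Finset.sum_sub_distrib]
      ring
    have hA : ∑ i, (hyperS d φ i - hyperS d ψ i) ^ 2 ≤ ‖φ - ψ‖ ^ 2 := by
      have h1 := hyperS_diff_sq d hd1 φ ψ
      have h2 : ‖φ - ψ‖ ^ 2 = ∑ i, (φ i - ψ i) ^ 2 := by
        rw [aux_norm_sq_eq]
        exact Finset.sum_congr rfl fun i _ => by rw [PiLp.sub_apply]
      linarith
    have hcs := aux_cs (∑ i, (hyperS d φ i - hyperS d ψ i) * y i) (b - c)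
      (∑ i, (hyperS d φ i - hyperS d ψ i) ^ 2) (∑ i, (y i) ^ 2)
      (by positivity) hysq0 (Finset.sum_mul_sq_le_sq_mul_sq _ _ _)
    have huv2 : (((∑ i, hyperS d φ i * y i) + b) - ((∑ i, hyperS d ψ i * y i) + c)) ^ 2
        ≤ N * ((∑ i, (y i) ^ 2) + 1) := by
      rw [huv]
      refine hcs.trans ?_
      apply mul_le_mul_of_nonneg_right _ (by positivity)
      rw [hN]
      linarith
    calc (max 0 ((∑ i, hyperS d φ i * y i) + b) ^ k
          - max 0 ((∑ i, hyperS d ψ i * y i) + c) ^ k) ^ 2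
        ≤ (k:ℝ) ^ 2 * (4 * d) ^ (k - 1) *
            (((∑ i, hyperS d φ i * y i) + b) - ((∑ i, hyperS d ψ i * y i) + c)) ^ 2 := hstep1
      _ ≤ (k:ℝ) ^ 2 * (4 * d) ^ (k - 1) * (N * ((∑ i, (y i) ^ 2) + 1)) := by
          apply mul_le_mul_of_nonneg_left huv2 (by positivity)
      _ = K * ((∑ i, (y i) ^ 2) + 1) := by rw [hK]; ring
  -- transfer the integral to the product space
  set G : (Fin d → ℝ) → ℝ := fun y =>
    (max 0 ((∑ i, hyperS d φ i * y i) + b) ^ k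
      - max 0 ((∑ i, hyperS d ψ i * y i) + c) ^ k) ^ 2 with hG
  have hset : {x : EuclideanSpace ℝ (Fin d) | ∀ i, x i ∈ Set.Ioo (0:ℝ) 1}
      = (⇑(MeasurableEquiv.toLp 2 (Fin d → ℝ)).symm) ⁻¹' auxBox d := by
    ext x
    simp [auxBox, Set.mem_pi]
  have htrans : (∫ x in {x : EuclideanSpace ℝ (Fin d) | ∀ i, x i ∈ Set.Ioo (0:ℝ) 1},
      (max 0 ((∑ i, hyperS d φ i * x i) + b) ^ k
        - max 0 ((∑ i, hyperS d ψ i * x i) + c) ^ k) ^ 2)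
      = ∫ y in auxBox d, G y := by
    rw [hset]
    exact (EuclideanSpace.volume_preserving_symm_measurableEquiv_toLp (Fin d)).setIntegral_preimage_emb
      (MeasurableEquiv.measurableEmbedding _) G (auxBox d)
  -- integrability of the majorant
  have hint1 : IntegrableOn (fun y : Fin d → ℝ => (∑ i, (y i) ^ 2) + 1) (auxBox d) := by
    refine Integrable.add ?_ ?_
    · exact integrable_finset_sum _ fun i _ => aux_integrableOn_sq i
    · refine (integrableOn_const_iff).2 (Or.inr ?_)
      rw [auxBox_volume_ennreal]
      exact ENNReal.one_lt_top
  have hint2 : IntegrableOn (fun y : Fin d → ℝ => K * ((∑ i, (y i) ^ 2) + 1)) (auxBox d) :=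
    hint1.const_mul K
  -- the integral bound
  have hmono : (∫ y in auxBox d, G y)
      ≤ ∫ y in auxBox d, K * ((∑ i, (y i) ^ 2) + 1) := by
    refine integral_mono_of_nonneg ?_ hint2 ?_
    · exact Filter.Eventually.of_forall fun y => sq_nonneg _
    · refine (ae_restrict_mem auxBox_meas).mono fun y hy => ?_
      exact hpt y fun i => hy i (Set.mem_univ i)
  have hval : (∫ y in auxBox d, K * ((∑ i, (y i) ^ 2) + 1)) = K * ((d:ℝ) / 3 + 1) := by
    rw [MeasureTheory.integral_const_mul]
    congr 1
    rw [integral_add (integrable_finset_sum _ fun i _ => aux_integrableOn_sq i)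
      ((integrableOn_const_iff).2 (Or.inr (by rw [auxBox_volume_ennreal]; exact ENNReal.one_lt_top)))]
    rw [integral_finset_sum _ fun i _ => aux_integrableOn_sq i]
    have h1 : ∀ i : Fin d, (∫ y in auxBox d, (y i) ^ 2) = 1 / 3 := aux_integral_sq
    rw [Finset.sum_congr rfl fun i _ => h1 i]
    rw [setIntegral_const, Measure.real_def, auxBox_volume]
    simp
    ring
  have hfirst : (∫ x in {x : EuclideanSpace ℝ (Fin d) | ∀ i, x i ∈ Set.Ioo (0:ℝ) 1},
      (max 0 ((∑ i, hyperS d φ i * x i) + b) ^ k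
        - max 0 ((∑ i, hyperS d ψ i * x i) + c) ^ k) ^ 2)
      ≤ (k:ℝ) ^ 2 * (4 * d) ^ (k - 1) * ((d:ℝ) / 3 + 1) * N := by
    rw [htrans]
    refine (hmono.trans (le_of_eq hval)).trans (le_of_eq ?_)
    rw [hK]; ring
  refine ⟨hfirst, ?_⟩
  have hsqrt := Real.sqrt_le_sqrt hfirst
  refine hsqrt.trans (le_of_eq ?_)
  have hpos : (0:ℝ) ≤ (d:ℝ) / 3 + 1 := by positivity
  have e1 : ((2 * Real.sqrt d) ^ (k - 1)) ^ 2 = ((4:ℝ) * d) ^ (k - 1) := by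
    rw [← pow_mul, mul_comm (k-1) 2, pow_mul, hM2]
  have e2 : (k:ℝ) ^ 2 * (4 * d) ^ (k - 1) * ((d:ℝ) / 3 + 1) * N
      = ((k:ℝ) * (2 * Real.sqrt d) ^ (k - 1) * Real.sqrt ((d:ℝ) / 3 + 1)) ^ 2 * N := by
    conv_rhs => rw [mul_pow, mul_pow, e1, Real.sq_sqrt hpos]
  rw [e2, Real.sqrt_mul (sq_nonneg _), Real.sqrt_sq (by positivity)]
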